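/- If (C, D) is an n×n matrix factorization of f (with CD = DC = f·I_n) and g, h are polynomials, then the 'first variant' matrices P' = [[h·I_n, D],[C, -g·I_n]] and Q' = [[g·I_n, D],[C, -h·I_n]] satisfy P'Q' = (f+gh)·I_{2n}, so (P', Q') is a 2n×2n matrix factorization of f + gh. -/
import Mathlib


open Matrix

/-- First variant of the standard method: with `P' = [[h·I, D],[C, -g·I]]` and
`Q' = [[g·I, D],[C, -h·I]]` one has `P'Q' = (f + gh)·I`, so `(P', Q')` is a
`2n×2n` matrix factorization of `f + gh`. -/
theorem standard_method_first_variant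
    {K : Type*} [Field K] {σ : Type*} {n : ℕ}
    (f g h : MvPolynomial σ K)
    (C D : Matrix (Fin n) (Fin n) (MvPolynomial σ K))
    (h1 : C * D = f • 1) (h2 : D * C = f • 1) :
    fromBlocks (h • 1) D C (-(g • 1)) * fromBlocks (g • 1) D C (-(h • 1)) =
      (f + g * h) • 1 ∧
    fromBlocks (g • 1) D C (-(h • 1)) * fromBlocks (h • 1) D C (-(g • 1)) =
      (f + g * h) • 1 := by
  have key : ((f + g * h) • (1 : Matrix (Fin n ⊕ Fin n) (Fin n ⊕ Fin n) (MvPolynomial σ K))) =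
      fromBlocks ((f + g * h) • 1) 0 0 ((f + g * h) • 1) := by
    rw [← fromBlocks_one, fromBlocks_smul, smul_zero]
  constructor <;>
  · rw [fromBlocks_multiply, key]
    congr 1 <;>
      simp [Matrix.smul_mul, Matrix.mul_smul, h1, h2, smul_smul, add_smul, mul_comm] <;> abel
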